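/- Let a < b, and let ξ : (a,b) → ℝ be a function satisfying: (i) ξ is lower semi-continuous; (ii) there are constants A > 0 and θ ∈ (0,1) with ξ(s') ≤ limsup_{σ→s⁺} ξ(σ) + A(s'−s)^θ for all a < s < s' < b; (iii) there exists L = lim_{s→a⁺} ξ(s) (the right limit at a exists). Then the extended running supremum e(t) = max{L, sup_{s∈(a,t)} ξ(s)} satisfies e(a⁺) = L and L ≤ e(t) ≤ L + A(t−a)^θ for all t ∈ (a,b); in particular e extends continuously to [a,b) with e(a) = L. -/

import Mathlib

open Set Filter

/-- Lemma 3.4 (iii) abstracted: if the localized energy has a right limit `L` at the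
initial time, the extended running supremum tends to `L` and is Hölder-close to `L`. -/
theorem stmt_18 (a b : ℝ) (hab : a < b)
    (ξ : ℝ → ℝ)
    (hlsc : LowerSemicontinuousOn ξ (Ioo a b))
    (A θ : ℝ) (hA : 0 < A) (hθ : θ ∈ Ioo (0 : ℝ) 1)
    (hgrow : ∀ s, a < s → ∀ s', s < s' → s' < b →
      ξ s' ≤ Filter.limsup ξ (nhdsWithin s (Ioi s)) + A * (s' - s) ^ θ)
    (L : ℝ) (hL : Filter.Tendsto ξ (nhdsWithin a (Ioi a)) (nhds L))
    (e : ℝ → ℝ) (he : ∀ t ∈ Ioo a b, e t = max L (sSup (ξ '' Ioo a t))) :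
    Filter.Tendsto e (nhdsWithin a (Ioi a)) (nhds L) ∧
    ∀ t ∈ Ioo a b, L ≤ e t ∧ e t ≤ L + A * (t - a) ^ θ := by
  obtain ⟨hθ0, hθ1⟩ := hθ
  -- key pointwise bound
  have key : ∀ s' ∈ Ioo a b, ξ s' ≤ L + A * (s' - a) ^ θ := by
    intro s' hs'
    refine le_of_forall_pos_le_add ?_
    intro ε hε
    have h1 : ∀ᶠ σ in nhdsWithin a (Ioi a), ξ σ < L + ε / 2 :=
      hL.eventually_lt_const (by linarith)
    obtain ⟨u, hu, hsub⟩ := mem_nhdsGT_iff_exists_Ioo_subset.mp h1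
    have hc : ContinuousAt (fun s : ℝ => A * (s' - s) ^ θ) a := by
      refine ContinuousAt.mul continuousAt_const ?_
      exact (Real.continuousAt_rpow_const _ _
        (Or.inl (sub_pos.mpr hs'.1).ne')).comp (by fun_prop)
    have h2 : ∀ᶠ s in nhdsWithin a (Ioi a),
        A * (s' - s) ^ θ < A * (s' - a) ^ θ + ε / 2 :=
      (hc.tendsto.eventually_lt_const (by linarith)).filter_mono nhdsWithin_le_nhds
    have h3 : ∀ᶠ s in nhdsWithin a (Ioi a), s ∈ Ioo a (min s' u) :=
      Ioo_mem_nhdsGT_of_mem ⟨le_refl a, lt_min hs'.1 hu⟩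
    obtain ⟨s, hs2, hs3⟩ := (h2.and h3).exists
    have has : a < s := hs3.1
    have hss' : s < s' := (lt_min_iff.mp hs3.2).1
    have hsu : s < u := (lt_min_iff.mp hs3.2).2
    have hbd : ∀ᶠ σ in nhdsWithin s (Ioi s), ξ σ ≤ L + ε / 2 := by
      filter_upwards [Ioo_mem_nhdsGT_of_mem ⟨le_refl s, hsu⟩] with σ hσ
      exact (hsub ⟨has.trans hσ.1, hσ.2⟩).le
    have hsab : s ∈ Ioo a b := ⟨has, hss'.trans hs'.2⟩
    have hlb : ∀ᶠ σ in nhdsWithin s (Ioi s), ξ s - 1 ≤ ξ σ := by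
      have := hlsc s hsab (ξ s - 1) (by linarith)
      rw [eventually_nhdsWithin_iff] at this
      filter_upwards [this.filter_mono nhdsWithin_le_nhds,
        mem_nhdsWithin_of_mem_nhds (isOpen_Ioo.mem_nhds hsab)] with σ h1 h2
      exact (h1 h2).le
    have hcb : IsCoboundedUnder (· ≤ ·) (nhdsWithin s (Ioi s)) ξ :=
      IsBoundedUnder.isCoboundedUnder_le ⟨ξ s - 1, hlb⟩
    have hls : Filter.limsup ξ (nhdsWithin s (Ioi s)) ≤ L + ε / 2 :=
      Filter.limsup_le_of_le hcb hbd
    have := hgrow s has s' hss' hs'.2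
    linarith
  -- bound on the supremum
  have hsup : ∀ t ∈ Ioo a b, sSup (ξ '' Ioo a t) ≤ L + A * (t - a) ^ θ := by
    intro t ht
    have hne : (ξ '' Ioo a t).Nonempty :=
      (nonempty_Ioo.mpr ht.1).image ξ
    refine csSup_le hne ?_
    rintro x ⟨s', hs', rfl⟩
    have h1 : ξ s' ≤ L + A * (s' - a) ^ θ := key s' ⟨hs'.1, hs'.2.trans ht.2⟩
    have h2 : (s' - a) ^ θ ≤ (t - a) ^ θ :=
      Real.rpow_le_rpow (by linarith [hs'.1]) (by linarith [hs'.2]) hθ0.le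
    nlinarith
  have hbnds : ∀ t ∈ Ioo a b, L ≤ e t ∧ e t ≤ L + A * (t - a) ^ θ := by
    intro t ht
    rw [he t ht]
    constructor
    · exact le_max_left _ _
    · refine max_le ?_ (hsup t ht)
      have : (0:ℝ) ≤ A * (t - a) ^ θ := by
        have : (0:ℝ) ≤ (t - a) ^ θ := Real.rpow_nonneg (by linarith [ht.1]) _
        positivity
      linarith
  refine ⟨?_, hbnds⟩
  -- squeeze
  have hub : Tendsto (fun t : ℝ => L + A * (t - a) ^ θ) (nhdsWithin a (Ioi a)) (nhds L) := by
    have h0 : Tendsto (fun t : ℝ => (t - a) ^ θ) (nhdsWithin a (Ioi a)) (nhds 0) := by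
      have hsub : Tendsto (fun t : ℝ => t - a) (nhdsWithin a (Ioi a)) (nhdsWithin 0 (Ioi 0)) := by
        refine tendsto_nhdsWithin_of_tendsto_nhds_of_eventually_within _ ?_ ?_
        · have : Tendsto (fun t : ℝ => t - a) (nhds a) (nhds (a - a)) :=
            (continuous_id.sub continuous_const).tendsto a
          simpa using this.mono_left nhdsWithin_le_nhds
        · filter_upwards [self_mem_nhdsWithin] with t ht
          exact mem_Ioi.mpr (sub_pos.mpr (mem_Ioi.mp ht))
      have hr : Tendsto (fun x : ℝ => x ^ θ) (nhdsWithin 0 (Ioi 0)) (nhds 0) := by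
        have := (Real.continuousAt_rpow_const 0 θ (Or.inr hθ0.le)).tendsto
        rw [Real.zero_rpow hθ0.ne'] at this
        exact this.mono_left nhdsWithin_le_nhds
      exact hr.comp hsub
    have : Tendsto (fun t : ℝ => L + A * (t - a) ^ θ) (nhdsWithin a (Ioi a))
        (nhds (L + A * 0)) := tendsto_const_nhds.add (tendsto_const_nhds.mul h0)
    simpa using this
  have hev : ∀ᶠ t in nhdsWithin a (Ioi a), t ∈ Ioo a b :=
    Ioo_mem_nhdsGT_of_mem ⟨le_refl a, hab⟩
  refine tendsto_of_tendsto_of_tendsto_of_le_of_le' tendsto_const_nhds hub ?_ ?_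
  · filter_upwards [hev] with t ht
    exact (hbnds t ht).1
  · filter_upwards [hev] with t ht
    exact (hbnds t ht).2
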